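/- Let r = q/p ∈ (0,1) be a rational number in lowest terms and n ≥ 2 an integer. Every piece relative to the symmetrized set R generated by u_r^n has length strictly less than p, i.e., strictly less than half of the length 2p of the word u_r. -/

import Mathlib

/-!
Common setup: 2-bridge link groups, Heckoid groups, the words `u_s`,
Möbius transformations on `ℚ ∪ {∞}` (modelled as `Option ℚ`, with `none = ∞`),
the group `Γ_{r,n}`, continued fractions, and small–cancellation notions.
-/

/-- The free group `F` on the two generators `a`, `b`. -/
abbrev FG := FreeGroup (Fin 2)

namespace Heckoid

/-- The generator `a`. -/
def ga : FG := FreeGroup.of 0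

/-- The generator `b`. -/
def gb : FG := FreeGroup.of 1

/-- `ε_i = (−1)^⌊ i q / p ⌋`, as an element `±1` of `ℤ`. -/
def epsSign (q : ℤ) (p : ℕ) (i : ℕ) : ℤ := (-1) ^ (Int.fdiv ((i : ℤ) * q) (p : ℤ)).natAbs

/-- The letter at position `i`: `b` if `i` is odd, `a` if `i` is even. -/
def genAt (i : ℕ) : FG := if i % 2 = 1 then gb else ga

/-- `v = b^{ε₁} a^{ε₂} b^{ε₃} ⋯` (`p − 1` alternating letters). -/
def vWord (q : ℤ) (p : ℕ) : FG :=
  ((List.range (p - 1)).map fun i => genAt (i + 1) ^ epsSign q p (i + 1)).prod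

/-- The word `u_s` associated with a rational number `s = q/p` in lowest terms:
`u_s = a v b^{(−1)^q} v⁻¹` if `p` is odd, and `u_s = a v a⁻¹ v⁻¹` if `p` is even. -/
def uWord (s : ℚ) : FG :=
  if s.den % 2 = 1 then
    ga * vWord s.num s.den * gb ^ ((-1 : ℤ) ^ s.num.natAbs) * (vWord s.num s.den)⁻¹
  else
    ga * vWord s.num s.den * ga⁻¹ * (vWord s.num s.den)⁻¹

/-- The even Heckoid group `H(r;n) = ⟨a, b ∣ u_r^n⟩`. -/
abbrev HeckoidGroup (r : ℚ) (n : ℕ) := PresentedGroup ({uWord r ^ n} : Set FG)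

/-- The natural projection `F → H(r;n)`. -/
def hMk (r : ℚ) (n : ℕ) : FG →* HeckoidGroup r n := PresentedGroup.mk _

/-- The 2-bridge link group `G(K(s)) = ⟨a, b ∣ u_s⟩`. -/
abbrev TwoBridgeGroup (s : ℚ) := PresentedGroup ({uWord s} : Set FG)

/-- The natural projection `F → G(K(s))`. -/
def tMk (s : ℚ) : FG →* TwoBridgeGroup s := PresentedGroup.mk _

/-- An epimorphism `G(K(s)) → H(r;n)` is upper-meridian-pair-preserving if it is surjective and
the unordered pair of conjugacy classes of the images of `a`, `b` coincides with the unordered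
pair of the conjugacy classes of `a`, `b` in `H(r;n)`. -/
def IsUMPP (s r : ℚ) (n : ℕ) (φ : TwoBridgeGroup s →* HeckoidGroup r n) : Prop :=
  Function.Surjective φ ∧
    ((IsConj (φ (tMk s ga)) (hMk r n ga) ∧ IsConj (φ (tMk s gb)) (hMk r n gb)) ∨
     (IsConj (φ (tMk s ga)) (hMk r n gb) ∧ IsConj (φ (tMk s gb)) (hMk r n ga)))

/-! ### Möbius transformations of `ℚ ∪ {∞}` -/

/-- The Möbius transformation of the matrix `[[A,B],[C,D]]` as a function on
`ℚ ∪ {∞} = Option ℚ` (`none` is `∞`). -/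
def mfun (A B C D : ℚ) : Option ℚ → Option ℚ
  | none => if C = 0 then none else some (A / C)
  | some x => if C * x + D = 0 then none else some ((A * x + B) / (C * x + D))

theorem mfun_leftInv (A B C D : ℚ) (h : A * D - B * C ≠ 0) :
    Function.LeftInverse (mfun D (-B) (-C) A) (mfun A B C D) := by
  intro x
  cases x with
  | none =>
    by_cases hC : C = 0
    · simp [mfun, hC]
    · have h1 : -C * (A / C) + A = 0 := by field_simp; ring
      simp only [mfun, if_neg hC, if_pos h1]
  | some x =>
    by_cases hx : C * x + D = 0
    · have hC : C ≠ 0 := by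
        rintro rfl
        simp only [zero_mul, zero_add] at hx
        rw [hx] at h
        simp at h
      simp only [mfun, if_pos hx]
      have h2 : ¬(-C = 0) := by simpa using hC
      simp only [mfun, if_neg h2]
      congr 1
      field_simp
      linarith
    · have key : -C * ((A * x + B) / (C * x + D)) + A = (A * D - B * C) / (C * x + D) := by
        field_simp
        ring
      have hne : ¬(-C * ((A * x + B) / (C * x + D)) + A = 0) := by
        rw [key]
        exact div_ne_zero h hx
      simp only [mfun, if_neg hx, if_neg hne]
      congr 1
      have e1 : D * ((A * x + B) / (C * x + D)) + -B = ((A * D - B * C) * x) / (C * x + D) := by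
        rw [eq_div_iff hx]
        rw [add_mul, mul_assoc, div_mul_cancel₀ _ hx]
        ring
      rw [e1, key, div_eq_iff (div_ne_zero h hx)]
      field_simp

/-- The Möbius transformation of an invertible matrix `[[A,B],[C,D]]`, as a bijection of
`ℚ ∪ {∞}`. -/
def moebius (A B C D : ℚ) (h : A * D - B * C ≠ 0) : Equiv.Perm (Option ℚ) where
  toFun := mfun A B C D
  invFun := mfun D (-B) (-C) A
  left_inv := mfun_leftInv A B C D h
  right_inv := fun x => by
    have h' : D * A - -B * -C ≠ 0 := fun hc => h (by linear_combination hc)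
    have := mfun_leftInv D (-B) (-C) A h' x
    simpa using this

/-- `ρ(s) = −s`. -/
def rhoPerm : Equiv.Perm (Option ℚ) := moebius (-1) 0 0 1 (by norm_num)

/-- `ρ'(s) = 2 − s`. -/
def rhoPerm' : Equiv.Perm (Option ℚ) := moebius (-1) 2 0 1 (by norm_num)

/-- The parabolic Möbius transformation centered at `r = q/p`, translating by `m` units:
the Möbius transformation of `[[1+mpq, −mq²],[mp², 1−mpq]]`. -/
def cPerm (r : ℚ) (m : ℤ) : Equiv.Perm (Option ℚ) :=
  moebius (1 + (m : ℚ) * r.den * r.num) (-((m : ℚ) * r.num ^ 2)) ((m : ℚ) * r.den ^ 2)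
    (1 - (m : ℚ) * r.den * r.num) (ne_of_eq_of_ne (by ring) one_ne_zero)

/-- The group `Γ_{r,n}` (`m = 2n`): the subgroup of the bijections of `ℚ ∪ {∞}` generated by
`ρ`, `ρ'` and the parabolic `c`. -/
def Gamma (r : ℚ) (m : ℤ) : Subgroup (Equiv.Perm (Option ℚ)) :=
  Subgroup.closure {rhoPerm, rhoPerm', cPerm r m}

/-- `y` is in the `Γ_{r,n}`-orbit of `x` (where `m = 2n`). -/
def orbitRel (r : ℚ) (m : ℤ) (x y : Option ℚ) : Prop :=
  ∃ g ∈ Gamma r m, g x = y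

/-! ### Continued fractions -/

/-- The matrix `[[0,1],[1,b₁]] ⋯ [[0,1],[1,b_l]]` of a continued fraction. -/
def cfMat : List ℤ → Matrix (Fin 2) (Fin 2) ℤ
  | [] => 1
  | b :: L => !![0, 1; 1, b] * cfMat L

/-- The value in `ℚ ∪ {∞}` of the continued fraction
`[b₁, …, b_l] = 1/(b₁ + 1/(b₂ + ⋯ + 1/b_l))`: the image of `0` under the Möbius transformation
of `cfMat`. -/
def cfValue (L : List ℤ) : Option ℚ :=
  mfun ((cfMat L 0 0 : ℤ) : ℚ) ((cfMat L 0 1 : ℤ) : ℚ) ((cfMat L 1 0 : ℤ) : ℚ)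
    ((cfMat L 1 1 : ℤ) : ℚ) (some 0)

/-! ### Small cancellation notions -/

/-- The symmetrized set `R` generated by `u_r^n`: all cyclic permutations of the reduced words
of `u_r^n` and of `u_r^{−n}`. -/
def SymmSet (r : ℚ) (n : ℕ) : Set FG :=
  {w | (∃ k, w.toWord = (uWord r ^ n).toWord.rotate k) ∨
       (∃ k, w.toWord = ((uWord r ^ n)⁻¹).toWord.rotate k)}

/-- A piece relative to `R`: a nonempty word which is a common initial segment of two distinct
elements of `R`. -/
def IsPiece (r : ℚ) (n : ℕ) (w : FG) : Prop :=
  w ≠ 1 ∧ ∃ x ∈ SymmSet r n, ∃ y ∈ SymmSet r n, x ≠ y ∧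
    w.toWord <+: x.toWord ∧ w.toWord <+: y.toWord

/-- `w` is a product of `k` pieces: a concatenation, without cancellation, of `k` pieces. -/
def IsProductOfPieces (r : ℚ) (n : ℕ) (k : ℕ) (w : FG) : Prop :=
  ∃ ws : List FG, ws.length = k ∧ (∀ v ∈ ws, IsPiece r n v) ∧
    w.toWord = (ws.map FreeGroup.toWord).flatten

/-- The product `x * y` is reduced without cancellation. -/
def NoCancel (x y : FG) : Prop := (x * y).toWord = x.toWord ++ y.toWord

/-- Small cancellation condition `C(p)`: no element of `R` is a product of fewer than `p`
pieces. -/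
def SatisfiesC (r : ℚ) (n : ℕ) (p : ℕ) : Prop :=
  ∀ w ∈ SymmSet r n, ∀ k < p, ¬ IsProductOfPieces r n k w

/-- Small cancellation condition `T(4)`. -/
def SatisfiesT4 (r : ℚ) (n : ℕ) : Prop :=
  ∀ r₁ ∈ SymmSet r n, ∀ r₂ ∈ SymmSet r n, ∀ r₃ ∈ SymmSet r n,
    r₂ ≠ r₁⁻¹ → r₃ ≠ r₂⁻¹ → r₁ ≠ r₃⁻¹ →
    NoCancel r₁ r₂ ∨ NoCancel r₂ r₃ ∨ NoCancel r₃ r₁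

/-- `w` is a subword of the cyclic word `(u)`: an initial segment of some cyclic permutation
of the reduced word of `u`. -/
def IsCyclicSubword (w u : FG) : Prop := ∃ k, w.toWord <+: u.toWord.rotate k

end Heckoid

namespace Heckoid

/-! ### Auxiliary machinery for Statement 8 -/

/-- Auxiliary: the floor `⌊iq/p⌋` as a function of `i : ℤ`. -/
def Pfn (q : ℤ) (p : ℕ) (i : ℤ) : ℤ := (i * q).fdiv p

/-- Auxiliary: the letter-with-sign at position `i` of the bi-infinite word. -/
def Ffn (q : ℤ) (p : ℕ) (i : ℤ) : Fin 2 × Bool :=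
  (if i % 2 = 0 then 0 else 1, decide (Pfn q p i % 2 = 0))

/-- Inversion of a single letter. -/
def pinv (x : Fin 2 × Bool) : Fin 2 × Bool := (x.1, !x.2)

lemma pinv_injective : Function.Injective pinv := by
  rintro ⟨a, b⟩ ⟨c, d⟩ h
  simp [pinv] at h
  simp [h.1, h.2]

lemma Pshift {q : ℤ} {p : ℕ} (hp : 0 < p) (i t : ℤ) :
    Pfn q p (i + t * p) = Pfn q p i + t * q := by
  unfold Pfn
  have hp' : (0:ℤ) < p := by exact_mod_cast hp
  rw [Int.fdiv_eq_ediv_of_nonneg _ hp'.le, Int.fdiv_eq_ediv_of_nonneg _ hp'.le]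
  have h : (i + t * p) * q = i * q + (t * q) * p := by ring
  rw [h, Int.add_mul_ediv_right _ _ hp'.ne']

lemma ltr_inj {x y : ℤ}
    (h : (if x % 2 = 0 then (0 : Fin 2) else 1) = (if y % 2 = 0 then (0 : Fin 2) else 1)) :
    x % 2 = y % 2 := by
  split_ifs at h with h1 h2 h2 <;> first | omega | (exact absurd h (by decide))

lemma extA {q : ℤ} {p : ℕ} (hp : 0 < p) (a b : ℤ)
    (h : ∀ j : ℤ, 0 ≤ j → j < p → Ffn q p (a + j) = Ffn q p (b + j)) (j : ℤ) :
    Ffn q p (a + j) = Ffn q p (b + j) := by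
  have hp' : (0:ℤ) < p := by exact_mod_cast hp
  have h0 := h 0 le_rfl hp'
  have h1 := h (j % p) (Int.emod_nonneg j hp'.ne') (Int.emod_lt_of_pos j hp')
  simp only [Ffn, Prod.mk.injEq] at h0 h1 ⊢
  have hj := Int.mul_ediv_add_emod j p
  have ea : a + j = (a + j % p) + (j / p) * p := by linarith
  have eb : b + j = (b + j % p) + (j / p) * p := by linarith
  have hab : a % 2 = b % 2 := by have := ltr_inj h0.1; omega
  constructor
  · have : (a + j) % 2 = (b + j) % 2 := by omega
    rw [this]
  · rw [ea, eb, Pshift hp, Pshift hp]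
    have hx := h1.2
    rw [decide_eq_decide] at hx ⊢
    clear hj ea eb h0 h1 h
    generalize j / (p:ℤ) * q = T at *
    omega

lemma extC {q : ℤ} {p : ℕ} (hp : 0 < p) (a b : ℤ)
    (h : ∀ j : ℤ, 0 ≤ j → j < p → Ffn q p (a - j) = Ffn q p (b - j)) (j : ℤ) :
    Ffn q p (a - j) = Ffn q p (b - j) := by
  have hp' : (0:ℤ) < p := by exact_mod_cast hp
  have h0 := h 0 le_rfl hp'
  have h1 := h (j % p) (Int.emod_nonneg j hp'.ne') (Int.emod_lt_of_pos j hp')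
  simp only [Ffn, Prod.mk.injEq] at h0 h1 ⊢
  have hj := Int.mul_ediv_add_emod j p
  have ea : a - j = (a - j % p) + (-(j / p)) * p := by linarith
  have eb : b - j = (b - j % p) + (-(j / p)) * p := by linarith
  have hab : a % 2 = b % 2 := by have := ltr_inj h0.1; omega
  constructor
  · have : (a - j) % 2 = (b - j) % 2 := by omega
    rw [this]
  · rw [ea, eb, Pshift hp, Pshift hp]
    have hx := h1.2
    rw [decide_eq_decide] at hx ⊢
    have hne : -(j / (p:ℤ)) * q = -(j / (p:ℤ) * q) := by ring
    rw [hne]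
    clear hj ea eb h0 h1 h
    generalize j / (p:ℤ) * q = T at *
    omega

lemma extB {q : ℤ} {p : ℕ} (hp : 0 < p) (a b : ℤ)
    (h : ∀ j : ℤ, 0 ≤ j → j < p → Ffn q p (a + j) = pinv (Ffn q p (b - j))) (j : ℤ) :
    Ffn q p (a + j) = pinv (Ffn q p (b - j)) := by
  have hp' : (0:ℤ) < p := by exact_mod_cast hp
  have h0 := h 0 le_rfl hp'
  have h1 := h (j % p) (Int.emod_nonneg j hp'.ne') (Int.emod_lt_of_pos j hp')
  simp only [Ffn, pinv, Prod.mk.injEq] at h0 h1 ⊢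
  have hj := Int.mul_ediv_add_emod j p
  have ea : a + j = (a + j % p) + (j / p) * p := by linarith
  have eb : b - j = (b - j % p) + (-(j / p)) * p := by linarith
  have hab : a % 2 = b % 2 := by have := ltr_inj h0.1; omega
  constructor
  · have : (a + j) % 2 = (b - j) % 2 := by omega
    rw [this]
  · rw [ea, eb, Pshift hp, Pshift hp]
    have hx := h1.2
    rw [Bool.eq_not, Ne, decide_eq_decide] at hx ⊢
    have hne : -(j / (p:ℤ)) * q = -(j / (p:ℤ) * q) := by ring
    rw [hne]
    clear hj ea eb h0 h1 h
    generalize j / (p:ℤ) * q = T at *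
    omega

lemma Ffn_congr {q : ℤ} {p : ℕ} (hp : 0 < p) {i₁ i₂ : ℤ} (h : (2 * (p:ℤ)) ∣ i₁ - i₂) :
    Ffn q p i₁ = Ffn q p i₂ := by
  obtain ⟨t, ht⟩ := h
  have hi : i₁ = i₂ + (2 * t) * (p:ℤ) := by linarith
  unfold Ffn
  have hP : Pfn q p i₁ = Pfn q p i₂ + (2 * t) * q := by rw [hi]; exact Pshift hp _ _
  have hmod : i₁ % 2 = i₂ % 2 := by
    have h2 : i₁ - i₂ = 2 * ((p:ℤ) * t) := by linarith
    generalize (p:ℤ) * t = T at h2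
    omega
  rw [hmod, hP]
  have h3 : (2 * t) * q = 2 * (t * q) := by ring
  rw [h3]
  congr 1
  rw [decide_eq_decide]
  generalize t * q = T
  omega

lemma reduce_eq_self : ∀ {L : List (Fin 2 × Bool)},
    L.Chain' (fun a b => a.1 ≠ b.1) → FreeGroup.reduce L = L := by
  intro L
  induction L with
  | nil => intro _; rfl
  | cons x L ih =>
    intro h
    rw [FreeGroup.reduce.cons, ih (List.isChain_cons.mp h).2]
    cases L with
    | nil => rfl
    | cons y tl =>
      have hxy : x.1 ≠ y.1 := (List.isChain_cons_cons.mp h).1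
      simp only [if_neg (by simp [hxy] : ¬(x.1 = y.1 ∧ x.2 = !y.2))]

lemma of_zpow (a : Fin 2) (e : ℤ) :
    (FreeGroup.of a) ^ ((-1 : ℤ) ^ e.natAbs) = FreeGroup.mk [(a, decide (e % 2 = 0))] := by
  rcases Int.even_or_odd e with he | he
  · have h1 : Even e.natAbs := Int.natAbs_even.mpr he
    rw [h1.neg_one_pow, zpow_one]
    have h2 : decide (e % 2 = 0) = true := by
      rw [decide_eq_true_eq]; exact Int.even_iff.mp he
    rw [h2]; rfl
  · have h1 : Odd e.natAbs := Int.natAbs_odd.mpr he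
    rw [h1.neg_one_pow, zpow_neg_one]
    have h2 : decide (e % 2 = 0) = false := by
      rw [decide_eq_false_iff_not]
      rw [Int.odd_iff] at he; omega
    rw [h2]
    show (FreeGroup.mk [(a, true)])⁻¹ = _
    rw [FreeGroup.inv_mk]
    rfl

lemma prod_mk (l : List ℕ) (f : ℕ → Fin 2 × Bool) :
    (l.map fun i => FreeGroup.mk [f i]).prod = FreeGroup.mk (l.map f) := by
  induction l with
  | nil => simp [FreeGroup.one_eq_mk]
  | cons a l ih =>
    simp only [List.map_cons, List.prod_cons, ih, FreeGroup.mul_mk]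
    rfl

lemma genAt_pow (q : ℤ) (p : ℕ) (i : ℕ) :
    genAt i ^ epsSign q p i = FreeGroup.mk [Ffn q p (i : ℤ)] := by
  have hg : genAt i = FreeGroup.of (if (i : ℤ) % 2 = 0 then (0 : Fin 2) else 1) := by
    unfold genAt ga gb
    split_ifs with h1 h2 h2 <;> first | rfl | omega
  rw [hg]
  exact of_zpow _ (Pfn q p i)

lemma vWord_mk (q : ℤ) (p : ℕ) :
    vWord q p = FreeGroup.mk ((List.range (p - 1)).map fun i => Ffn q p ((i + 1 : ℕ) : ℤ)) := by
  unfold vWord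
  rw [List.map_congr_left (fun i _ => genAt_pow q p (i + 1))]
  exact prod_mk _ _

lemma not_dvd_tq {q : ℤ} {p : ℕ} (hcop : q.natAbs.Coprime p) {t : ℤ}
    (h1 : 0 < t) (h2 : t < p) : ¬ ((p : ℤ) ∣ t * q) := by
  intro hdvd
  have h3 : p ∣ (t * q).natAbs := by
    have := Int.natAbs_dvd_natAbs.mpr hdvd
    simpa using this
  rw [Int.natAbs_mul] at h3
  have h4 : p ∣ t.natAbs := (Nat.Coprime.dvd_of_dvd_mul_right (hcop.symm) h3)
  have h5 : 0 < t.natAbs := by omega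
  have h6 := Nat.le_of_dvd h5 h4
  omega

lemma Pfn_neg {q : ℤ} {p : ℕ} (hp : 0 < p) {t : ℤ} (hnd : ¬ ((p : ℤ) ∣ t * q)) :
    Pfn q p (-t) = -Pfn q p t - 1 := by
  have hp' : (0:ℤ) < p := by exact_mod_cast hp
  unfold Pfn
  rw [Int.fdiv_eq_ediv_of_nonneg _ hp'.le, Int.fdiv_eq_ediv_of_nonneg _ hp'.le]
  set d := t * q / (p:ℤ) with hd
  set m := t * q % (p:ℤ) with hmdef
  have e1 : (p:ℤ) * d + m = t * q := Int.mul_ediv_add_emod _ _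
  have hm0 : 0 ≤ m := Int.emod_nonneg _ hp'.ne'
  have hm1 : m < p := Int.emod_lt_of_pos _ hp'
  have hmne : m ≠ 0 := by
    intro h0
    exact hnd (Dvd.intro d (by linarith))
  set d' := (-t) * q / (p:ℤ) with hd'
  set m' := (-t) * q % (p:ℤ) with hm'def
  have e2 : (p:ℤ) * d' + m' = (-t) * q := Int.mul_ediv_add_emod _ _
  have hm0' : 0 ≤ m' := Int.emod_nonneg _ hp'.ne'
  have hm1' : m' < p := Int.emod_lt_of_pos _ hp'
  have hsum : (p:ℤ) * (d + d') = -(m + m') := by linarith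
  have hs1 : d + d' < 0 := by
    by_contra hc
    push_neg at hc
    have : 0 ≤ (p:ℤ) * (d + d') := mul_nonneg hp'.le hc
    omega
  have hs2 : -2 < d + d' := by
    by_contra hc
    push_neg at hc
    have : (p:ℤ) * (d + d') ≤ (p:ℤ) * (-2) := by
      exact mul_le_mul_of_nonneg_left hc hp'.le
    omega
  have : d + d' = -1 := by omega
  linarith

lemma Ffn_reflect {q : ℤ} {p : ℕ} (hp : 0 < p) (hcop : q.natAbs.Coprime p) {t : ℤ}
    (h1 : 0 < t) (h2 : t < p) :
    Ffn q p (2 * (p:ℤ) - t) = pinv (Ffn q p t) := by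
  have hnd := not_dvd_tq hcop h1 h2
  have hPn := Pfn_neg hp hnd
  have he : 2 * (p:ℤ) - t = -t + 2 * (p:ℤ) := by ring
  have hP : Pfn q p (2 * (p:ℤ) - t) = -Pfn q p t - 1 + 2 * q := by
    rw [he, Pshift hp, hPn]
  unfold Ffn pinv
  simp only [Prod.mk.injEq]
  constructor
  · have : (2 * (p:ℤ) - t) % 2 = t % 2 := by omega
    rw [this]
  · rw [hP, Bool.eq_not, Ne, decide_eq_decide]
    omega

lemma main_mk (q : ℤ) (p : ℕ) (hq0 : 0 < q) (hqp : q < p) (hcop : q.natAbs.Coprime p) :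
    (if p % 2 = 1 then ga * vWord q p * gb ^ ((-1 : ℤ) ^ q.natAbs) * (vWord q p)⁻¹
     else ga * vWord q p * ga⁻¹ * (vWord q p)⁻¹)
      = FreeGroup.mk ((List.range (2 * p)).map fun i : ℕ => Ffn q p (i : ℤ)) := by
  obtain ⟨m, rfl⟩ : ∃ m, p = m + 1 := ⟨p - 1, by omega⟩
  have hp : 0 < m + 1 := Nat.succ_pos m
  -- the first letter
  have hga : ga = FreeGroup.mk [Ffn q (m+1) (0 : ℤ)] := by
    unfold ga
    show FreeGroup.mk _ = _
    congr 1
    unfold Ffn Pfn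
    norm_num
  -- the middle letter
  have hPp : Pfn q (m+1) ((m+1 : ℕ) : ℤ) = q := by
    unfold Pfn
    rw [Int.fdiv_eq_ediv_of_nonneg _ (by positivity)]
    exact Int.mul_ediv_cancel_left q (show ((m+1 : ℕ) : ℤ) ≠ 0 by positivity)
  -- the reversed part
  have hinv : FreeGroup.invRev ((List.range m).map fun i => Ffn q (m+1) ((i + 1 : ℕ) : ℤ))
      = (List.range m).map fun i => Ffn q (m+1) ((m + 2 + i : ℕ) : ℤ) := by
    apply List.ext_getElem
    · simp [FreeGroup.invRev]
    · intro i h1 h2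
      have him : i < m := by simpa [FreeGroup.invRev] using h1
      simp only [FreeGroup.invRev, List.getElem_reverse, List.length_map, List.length_range,
        List.getElem_map, List.getElem_range]
      show pinv (Ffn q (m+1) ((m - 1 - i + 1 : ℕ) : ℤ)) = Ffn q (m+1) ((m + 2 + i : ℕ) : ℤ)
      have hc1 : ((m - 1 - i + 1 : ℕ) : ℤ) = ((m - i : ℕ) : ℤ) := by omega
      have hc2 : ((m + 2 + i : ℕ) : ℤ) = 2 * ((m+1 : ℕ) : ℤ) - ((m - i : ℕ) : ℤ) := by
        push_cast; omega
      rw [hc1, hc2, Ffn_reflect hp hcop (by omega) (by push_cast; omega)]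
  -- the word split
  have hsplit : (List.range (2 * (m+1))).map (fun i : ℕ => Ffn q (m+1) (i : ℤ)) =
      Ffn q (m+1) ((0:ℕ) : ℤ) ::
        (((List.range m).map fun i => Ffn q (m+1) ((i + 1 : ℕ) : ℤ)) ++
          Ffn q (m+1) ((m + 1 : ℕ) : ℤ) ::
            ((List.range m).map fun i => Ffn q (m+1) ((m + 2 + i : ℕ) : ℤ))) := by
    have h : 2 * (m+1) = (m+1) + (m+1) := by ring
    rw [h, List.range_add, List.map_append, List.range_succ_eq_map, List.map_cons, List.map_cons,
      List.map_map, List.map_map, List.cons_append, List.map_cons, List.map_map]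
    congr 1
    congr 1
    congr 1
    norm_num
    intro a _
    congr 1
    ring
  rw [hsplit, vWord_mk]
  have hm1 : m + 1 - 1 = m := by omega
  rw [hm1, hga]
  split_ifs with hodd
  · -- p odd : middle letter is b^{(-1)^q}
    have hmid : gb ^ ((-1 : ℤ) ^ q.natAbs) = FreeGroup.mk [Ffn q (m+1) ((m + 1 : ℕ) : ℤ)] := by
      unfold gb
      rw [of_zpow]
      unfold Ffn
      rw [hPp, if_neg (show ¬ (((m + 1 : ℕ) : ℤ) % 2 = 0) by omega)]
    rw [hmid, FreeGroup.inv_mk, hinv, FreeGroup.mul_mk, FreeGroup.mul_mk, FreeGroup.mul_mk]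
    congr 1
    simp
  · -- p even : middle letter is a⁻¹, and q is odd
    have hqodd : ¬ (q % 2 = 0) := by
      intro hq2
      have h2q : (2:ℕ) ∣ q.natAbs := by omega
      have h2p : (2:ℕ) ∣ (m+1) := by omega
      have := Nat.dvd_gcd h2q h2p
      rw [hcop] at this
      omega
    have hmid : (FreeGroup.mk [Ffn q (m+1) (0 : ℤ)])⁻¹ = FreeGroup.mk [Ffn q (m+1) ((m + 1 : ℕ) : ℤ)] := by
      rw [FreeGroup.inv_mk]
      congr 1
      have h0 : Ffn q (m+1) (0 : ℤ) = (0, true) := by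
        unfold Ffn Pfn
        norm_num
      rw [h0]
      unfold Ffn
      rw [hPp, if_pos (show (((m + 1 : ℕ) : ℤ) % 2 = 0) by omega)]
      simp [FreeGroup.invRev, hqodd]
    rw [hmid, FreeGroup.inv_mk, hinv, FreeGroup.mul_mk, FreeGroup.mul_mk, FreeGroup.mul_mk]
    congr 1
    simp

lemma uWord_mk (r : ℚ) (hr0 : 0 < r) (hr1 : r < 1) :
    uWord r = FreeGroup.mk ((List.range (2 * r.den)).map fun i : ℕ => Ffn r.num r.den (i : ℤ)) := by
  have hq0 : 0 < r.num := Rat.num_pos.mpr hr0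
  have hqp : r.num < r.den := Rat.num_lt_denom_iff.mpr hr1
  unfold uWord
  exact main_mk r.num r.den hq0 hqp r.reduced

lemma flatten_replicate (q : ℤ) (p : ℕ) (hp : 0 < p) (n : ℕ) :
    List.flatten (List.replicate n ((List.range (2 * p)).map fun i : ℕ => Ffn q p (i : ℤ)))
      = (List.range (2 * p * n)).map fun i : ℕ => Ffn q p (i : ℤ) := by
  induction n with
  | zero => simp
  | succ n ih =>
    rw [List.replicate_succ, List.flatten_cons, ih]
    have h : 2 * p * (n + 1) = 2 * p + 2 * p * n := by ring
    rw [h, List.range_add, List.map_append, List.map_map]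
    congr 1
    refine List.map_congr_left fun i _ => ?_
    show Ffn q p ((i : ℕ) : ℤ) = Ffn q p ((2 * p + i : ℕ) : ℤ)
    refine Ffn_congr hp ⟨-1, ?_⟩
    push_cast
    ring

lemma chain_range_map (q : ℤ) (p : ℕ) (N : ℕ) :
    ((List.range N).map fun i : ℕ => Ffn q p (i : ℤ)).Chain'
      (fun a b => a.1 ≠ b.1) := by
  rw [show List.Chain' _ _ = List.IsChain _ _ from rfl, List.isChain_map]
  cases N with
  | zero => simp
  | succ k =>
    rw [List.isChain_range_succ]
    intro i _
    show (Ffn q p (i : ℤ)).1 ≠ (Ffn q p ((i + 1 : ℕ) : ℤ)).1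
    unfold Ffn
    dsimp only
    split_ifs with h1 h2 h2 <;> first | omega | decide

lemma uPow_toWord (r : ℚ) (hr0 : 0 < r) (hr1 : r < 1) (n : ℕ) :
    (uWord r ^ n).toWord = (List.range (2 * r.den * n)).map fun i : ℕ => Ffn r.num r.den (i : ℤ) := by
  rw [uWord_mk r hr0 hr1, FreeGroup.pow_mk, flatten_replicate r.num r.den r.den_pos n,
    FreeGroup.toWord_mk, reduce_eq_self (chain_range_map _ _ _)]

lemma getL (q : ℤ) (p : ℕ) (hp : 0 < p) (n : ℕ) (k j : ℕ)
    (hj2 : j < ((((List.range (2*p*n)).map fun i : ℕ => Ffn q p (i:ℤ))).rotate k).length) :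
    (((List.range (2*p*n)).map fun i : ℕ => Ffn q p (i:ℤ)).rotate k)[j]
      = Ffn q p ((j : ℤ) + (k : ℤ)) := by
  rw [List.getElem_rotate]
  simp only [List.length_map, List.length_range, List.getElem_map, List.getElem_range]
  refine Ffn_congr hp ⟨-((n:ℤ) * (((j + k) / (2*p*n) : ℕ) : ℤ)), ?_⟩
  have hnat : (j + k) % (2*p*n) + (2*p*n) * ((j + k) / (2*p*n)) = j + k :=
    Nat.mod_add_div _ _
  have hz : (((j + k) % (2*p*n) : ℕ) : ℤ) + (2*(p:ℤ)*n) * (((j + k) / (2*p*n) : ℕ) : ℤ)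
      = (j:ℤ) + k := by exact_mod_cast congrArg (fun x : ℕ => (x : ℤ)) hnat
  linear_combination hz

lemma getM (q : ℤ) (p : ℕ) (hp : 0 < p) (n : ℕ) (hn : 0 < n) (k j : ℕ)
    (hj2 : j < ((FreeGroup.invRev ((List.range (2*p*n)).map fun i : ℕ => Ffn q p (i:ℤ))).rotate k).length) :
    ((FreeGroup.invRev ((List.range (2*p*n)).map fun i : ℕ => Ffn q p (i:ℤ))).rotate k)[j]
      = pinv (Ffn q p ((2*p*n : ℕ) - 1 - (j : ℤ) - (k : ℤ))) := by
  have hN : 0 < 2*p*n := by positivity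
  have hlen : (FreeGroup.invRev ((List.range (2*p*n)).map fun i : ℕ => Ffn q p (i:ℤ))).length
      = 2*p*n := by simp [FreeGroup.invRev]
  rw [List.getElem_rotate]
  simp only [hlen]
  simp only [FreeGroup.invRev, List.getElem_reverse, List.length_map, List.length_range,
    List.getElem_map, List.getElem_range]
  show pinv (Ffn q p ((2*p*n - 1 - (j + k) % (2*p*n) : ℕ) : ℤ))
      = pinv (Ffn q p ((2*p*n : ℕ) - 1 - (j : ℤ) - (k : ℤ)))
  congr 1
  have hm : (j + k) % (2*p*n) < 2*p*n := Nat.mod_lt _ hN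
  have hc : ((2*p*n - 1 - (j + k) % (2*p*n) : ℕ) : ℤ)
      = (2*p*n : ℕ) - 1 - (((j + k) % (2*p*n) : ℕ) : ℤ) := by omega
  rw [hc]
  refine Ffn_congr hp ⟨(n:ℤ) * (((j + k) / (2*p*n) : ℕ) : ℤ), ?_⟩
  have hnat : (j + k) % (2*p*n) + (2*p*n) * ((j + k) / (2*p*n)) = j + k :=
    Nat.mod_add_div _ _
  have hz : (((j + k) % (2*p*n) : ℕ) : ℤ) + (2*(p:ℤ)*n) * (((j + k) / (2*p*n) : ℕ) : ℤ)
      = (j:ℤ) + k := by exact_mod_cast congrArg (fun x : ℕ => (x : ℤ)) hnat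
  linear_combination - hz

/-- Every piece relative to the symmetrized set generated by `u_r^n` has
length strictly less than `p = r.den`, i.e., strictly less than half of the length `2p`
of `u_r`. -/
theorem piece_length_lt (r : ℚ) (hr0 : 0 < r) (hr1 : r < 1) (n : ℕ) (hn : 2 ≤ n) :
    ∀ w : FG, IsPiece r n w → w.toWord.length < r.den := by
  intro w hw
  by_contra hlen
  push_neg at hlen
  obtain ⟨-, x, hx, y, hy, hxy, hpx, hpy⟩ := hw
  have hp : 0 < r.den := r.den_pos
  have hn0 : 0 < n := by omega
  have hN0 : 0 < 2 * r.den * n := by positivity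
  have hpN : r.den ≤ 2 * r.den * n := by
    calc r.den ≤ r.den * (2 * n) := Nat.le_mul_of_pos_right _ (by omega)
    _ = 2 * r.den * n := by ring
  have hLw := uPow_toWord r hr0 hr1 n
  have hMw : ((uWord r ^ n)⁻¹).toWord
      = FreeGroup.invRev ((List.range (2 * r.den * n)).map fun i : ℕ => Ffn r.num r.den (i : ℤ)) := by
    rw [FreeGroup.toWord_inv, hLw]
  simp only [SymmSet, Set.mem_setOf_eq, hLw, hMw] at hx hy
  apply hxy
  apply FreeGroup.toWord_injective
  have hwin : ∀ (j : ℕ), j < r.den → ∀ (L1 L2 : List (Fin 2 × Bool)), w.toWord <+: L1 →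
      w.toWord <+: L2 → ∀ (h1 : j < L1.length) (h2 : j < L2.length), L1[j] = L2[j] := by
    intro j hj L1 L2 hp1 hp2 h1 h2
    have hjw : j < w.toWord.length := lt_of_lt_of_le hj hlen
    exact (hp1.getElem hjw).symm.trans (hp2.getElem hjw)
  have hsub : ∀ A B C : ℤ, A - 1 - B - C = (A - 1 - C) - B := by intros; ring
  rcases hx with ⟨k1, hk1⟩ | ⟨k1, hk1⟩ <;> rcases hy with ⟨k2, hk2⟩ | ⟨k2, hk2⟩ <;>
    rw [hk1] at hpx <;> rw [hk2] at hpy <;> rw [hk1, hk2] <;>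
    apply List.ext_getElem (by simp [FreeGroup.invRev]) <;> intro j hj1 hj2
  · -- case L L
    have hwinz : ∀ jz : ℤ, 0 ≤ jz → jz < r.den →
        Ffn r.num r.den ((k1:ℤ) + jz) = Ffn r.num r.den ((k2:ℤ) + jz) := by
      intro jz h0 hjp
      obtain ⟨jj, rfl⟩ := Int.eq_ofNat_of_zero_le h0
      have hjj : jj < r.den := by exact_mod_cast hjp
      have hl1 : jj < (((List.range (2*r.den*n)).map fun i : ℕ => Ffn r.num r.den (i:ℤ)).rotate k1).length := by
        simp only [List.length_rotate, List.length_map, List.length_range]; omega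
      have hl2 : jj < (((List.range (2*r.den*n)).map fun i : ℕ => Ffn r.num r.den (i:ℤ)).rotate k2).length := by
        simp only [List.length_rotate, List.length_map, List.length_range]; omega
      have h := hwin jj hjj _ _ hpx hpy hl1 hl2
      rw [getL r.num r.den hp n k1 jj hl1, getL r.num r.den hp n k2 jj hl2] at h
      rw [add_comm ((k1:ℤ)), add_comm ((k2:ℤ))]
      exact h
    have hall := extA hp _ _ hwinz (j : ℤ)
    rw [getL r.num r.den hp n k1 j hj1, getL r.num r.den hp n k2 j hj2]
    rw [add_comm ((k1:ℤ)), add_comm ((k2:ℤ))] at hall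
    exact hall
  · -- case L M
    have hwinz : ∀ jz : ℤ, 0 ≤ jz → jz < r.den →
        Ffn r.num r.den ((k1:ℤ) + jz)
          = pinv (Ffn r.num r.den ((((2*r.den*n : ℕ)) : ℤ) - 1 - (k2:ℤ) - jz)) := by
      intro jz h0 hjp
      obtain ⟨jj, rfl⟩ := Int.eq_ofNat_of_zero_le h0
      have hjj : jj < r.den := by exact_mod_cast hjp
      have hl1 : jj < (((List.range (2*r.den*n)).map fun i : ℕ => Ffn r.num r.den (i:ℤ)).rotate k1).length := by
        simp only [List.length_rotate, List.length_map, List.length_range]; omega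
      have hl2 : jj < ((FreeGroup.invRev ((List.range (2*r.den*n)).map fun i : ℕ => Ffn r.num r.den (i:ℤ))).rotate k2).length := by
        simp only [List.length_rotate, FreeGroup.invRev, List.length_reverse, List.length_map,
          List.length_range]; omega
      have h := hwin jj hjj _ _ hpx hpy hl1 hl2
      rw [getL r.num r.den hp n k1 jj hl1, getM r.num r.den hp n hn0 k2 jj hl2] at h
      rw [hsub] at h
      rw [add_comm ((k1:ℤ))]
      exact h
    have hall := extB hp _ _ hwinz (j : ℤ)
    rw [getL r.num r.den hp n k1 j hj1, getM r.num r.den hp n hn0 k2 j hj2]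
    rw [add_comm ((k1:ℤ))] at hall
    rw [hsub]
    exact hall
  · -- case M L
    have hwinz : ∀ jz : ℤ, 0 ≤ jz → jz < r.den →
        Ffn r.num r.den ((k2:ℤ) + jz)
          = pinv (Ffn r.num r.den ((((2*r.den*n : ℕ)) : ℤ) - 1 - (k1:ℤ) - jz)) := by
      intro jz h0 hjp
      obtain ⟨jj, rfl⟩ := Int.eq_ofNat_of_zero_le h0
      have hjj : jj < r.den := by exact_mod_cast hjp
      have hl1 : jj < ((FreeGroup.invRev ((List.range (2*r.den*n)).map fun i : ℕ => Ffn r.num r.den (i:ℤ))).rotate k1).length := by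
        simp only [List.length_rotate, FreeGroup.invRev, List.length_reverse, List.length_map,
          List.length_range]; omega
      have hl2 : jj < (((List.range (2*r.den*n)).map fun i : ℕ => Ffn r.num r.den (i:ℤ)).rotate k2).length := by
        simp only [List.length_rotate, List.length_map, List.length_range]; omega
      have h := hwin jj hjj _ _ hpx hpy hl1 hl2
      rw [getM r.num r.den hp n hn0 k1 jj hl1, getL r.num r.den hp n k2 jj hl2] at h
      rw [hsub] at h
      rw [add_comm ((k2:ℤ))]
      exact h.symm
    have hall := extB hp _ _ hwinz (j : ℤ)
    rw [getM r.num r.den hp n hn0 k1 j hj1, getL r.num r.den hp n k2 j hj2]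
    rw [add_comm ((k2:ℤ))] at hall
    rw [hsub]
    exact hall.symm
  · -- case M M
    have hwinz : ∀ jz : ℤ, 0 ≤ jz → jz < r.den →
        Ffn r.num r.den (((((2*r.den*n : ℕ)) : ℤ) - 1 - (k1:ℤ)) - jz)
          = Ffn r.num r.den (((((2*r.den*n : ℕ)) : ℤ) - 1 - (k2:ℤ)) - jz) := by
      intro jz h0 hjp
      obtain ⟨jj, rfl⟩ := Int.eq_ofNat_of_zero_le h0
      have hjj : jj < r.den := by exact_mod_cast hjp
      have hl1 : jj < ((FreeGroup.invRev ((List.range (2*r.den*n)).map fun i : ℕ => Ffn r.num r.den (i:ℤ))).rotate k1).length := by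
        simp only [List.length_rotate, FreeGroup.invRev, List.length_reverse, List.length_map,
          List.length_range]; omega
      have hl2 : jj < ((FreeGroup.invRev ((List.range (2*r.den*n)).map fun i : ℕ => Ffn r.num r.den (i:ℤ))).rotate k2).length := by
        simp only [List.length_rotate, FreeGroup.invRev, List.length_reverse, List.length_map,
          List.length_range]; omega
      have h := hwin jj hjj _ _ hpx hpy hl1 hl2
      rw [getM r.num r.den hp n hn0 k1 jj hl1, getM r.num r.den hp n hn0 k2 jj hl2] at h
      have h' := pinv_injective h
      rw [hsub _ (jj:ℤ) (k1:ℤ), hsub _ (jj:ℤ) (k2:ℤ)] at h'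
      exact h'
    have hall := extC hp _ _ hwinz (j : ℤ)
    rw [getM r.num r.den hp n hn0 k1 j hj1, getM r.num r.den hp n hn0 k2 j hj2]
    rw [hsub ((2*r.den*n : ℕ) : ℤ) (j:ℤ) (k1:ℤ), hsub ((2*r.den*n : ℕ) : ℤ) (j:ℤ) (k2:ℤ)]
    exact congrArg pinv hall


end Heckoid
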